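/- Water-filling structure for bandwidth: at an optimum of minimizing Σᵢ cᵢ·xᵢ·(2^(aᵢ/xᵢ) − 1) subject to Σᵢ xᵢ = B, xᵢ > 0 (with constants aᵢ, cᵢ > 0), there exists λ > 0 such that for every i: cᵢ·(2^(aᵢ/xᵢ) − (aᵢ/xᵢ)·2^(aᵢ/xᵢ)·ln 2 − 1) + λ = 0. -/

import Mathlib

lemma hasDerivAt_f (a c t : ℝ) (ht : 0 < t) :
    HasDerivAt (fun s : ℝ => c * (s * ((2:ℝ) ^ (a / s) - 1)))
      (c * ((2:ℝ) ^ (a / t) - (a / t) * (2:ℝ) ^ (a / t) * Real.log 2 - 1)) t := by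
  have h1 : HasDerivAt (fun s : ℝ => a / s) (a * (-(t ^ 2)⁻¹)) t := by
    simpa [div_eq_mul_inv] using (hasDerivAt_inv ht.ne').const_mul a
  have h2 : HasDerivAt (fun s : ℝ => (2:ℝ) ^ (a / s))
      (0 * (a / t) * (2:ℝ) ^ (a / t - 1) + (a * (-(t ^ 2)⁻¹)) * (2:ℝ) ^ (a / t) * Real.log 2) t :=
    (hasDerivAt_const t (2:ℝ)).rpow h1 (by norm_num)
  have h3 : HasDerivAt (fun s : ℝ => c * (s * ((2:ℝ) ^ (a / s) - 1)))
      (c * (1 * ((2:ℝ) ^ (a / t) - 1) + t * (0 * (a / t) * (2:ℝ) ^ (a / t - 1)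
        + (a * (-(t ^ 2)⁻¹)) * (2:ℝ) ^ (a / t) * Real.log 2))) t :=
    ((hasDerivAt_id' t).mul (h2.sub_const 1)).const_mul c
  convert h3 using 1
  field_simp
  ring

lemma sign_lemma (u : ℝ) (hu : 0 < u) :
    (2:ℝ) ^ u - u * (2:ℝ) ^ u * Real.log 2 - 1 < 0 := by
  have hlog : 0 < Real.log 2 := Real.log_pos (by norm_num)
  have hv : 0 < u * Real.log 2 := mul_pos hu hlog
  have h2u : (2:ℝ) ^ u = Real.exp (u * Real.log 2) := by
    rw [Real.rpow_def_of_pos (by norm_num), mul_comm]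
  have key : 1 - u * Real.log 2 < Real.exp (-(u * Real.log 2)) := by
    have := Real.add_one_lt_exp (x := -(u * Real.log 2)) (by linarith)
    linarith
  have hpos : 0 < (2:ℝ) ^ u := Real.rpow_pos_of_pos (by norm_num) u
  have hmul : (2:ℝ) ^ u * (1 - u * Real.log 2) < (2:ℝ) ^ u * Real.exp (-(u * Real.log 2)) :=
    mul_lt_mul_of_pos_left key hpos
  have hone : (2:ℝ) ^ u * Real.exp (-(u * Real.log 2)) = 1 := by
    rw [h2u, ← Real.exp_add]; simp
  nlinarith

/-- Water-filling structure: at an optimum of `min Σᵢ cᵢ·xᵢ·(2^(aᵢ/xᵢ) − 1)` subject to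
`Σᵢ xᵢ = B`, `xᵢ > 0`, there exists λ > 0 satisfying the KKT stationarity condition. -/
theorem stmt19 {ι : Type*} [Fintype ι] (a c : ι → ℝ) (B : ℝ)
    (ha : ∀ i, 0 < a i) (hc : ∀ i, 0 < c i) (hB : 0 < B)
    (x : ι → ℝ) (hx : ∀ i, 0 < x i) (hsum : ∑ i, x i = B)
    (hopt : ∀ y : ι → ℝ, (∀ i, 0 < y i) → ∑ i, y i = B →
      ∑ i, c i * (x i * ((2 : ℝ) ^ (a i / x i) - 1)) ≤
        ∑ i, c i * (y i * ((2 : ℝ) ^ (a i / y i) - 1))) :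
    ∃ lam : ℝ, 0 < lam ∧ ∀ i,
      c i * ((2 : ℝ) ^ (a i / x i) - (a i / x i) * (2 : ℝ) ^ (a i / x i) * Real.log 2 - 1)
        + lam = 0 := by
  classical
  set f : ι → ℝ → ℝ := fun i t => c i * (t * ((2:ℝ) ^ (a i / t) - 1)) with hfdef
  set g : ι → ℝ → ℝ :=
    fun i t => c i * ((2:ℝ) ^ (a i / t) - (a i / t) * (2:ℝ) ^ (a i / t) * Real.log 2 - 1)
    with hgdef
  rcases isEmpty_or_nonempty ι with hempty | ⟨⟨i0⟩⟩
  · exact ⟨1, one_pos, fun i => (hempty.false i).elim⟩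
  -- generic sum decomposition
  have hdecomp : ∀ (j : ι), j ≠ i0 → ∀ (z : ι → ℝ),
      ∑ k, z k = z i0 + z j + ∑ k ∈ (Finset.univ.erase i0).erase j, z k := by
    intro j hj z
    rw [← Finset.add_sum_erase _ _ (Finset.mem_univ i0),
        ← Finset.add_sum_erase _ _ (Finset.mem_erase.mpr ⟨hj, Finset.mem_univ j⟩)]
    ring
  have key : ∀ j, g j (x j) = g i0 (x i0) := by
    intro j
    by_cases hji : j = i0
    · rw [hji]
    · set δ := min (x i0) (x j) with hδ
      have hδpos : 0 < δ := lt_min (hx i0) (hx j)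
      set F : ℝ → ℝ := fun ε => f i0 (x i0 + ε) + f j (x j - ε) with hF
      have hmin : IsLocalMin F 0 := by
        filter_upwards [Ioo_mem_nhds (neg_lt_zero.mpr hδpos) hδpos] with ε hε
        set y : ι → ℝ := Function.update (Function.update x i0 (x i0 + ε)) j (x j - ε)
          with hy
        have hyio : y i0 = x i0 + ε := by
          rw [hy, Function.update_of_ne (Ne.symm hji), Function.update_self]
        have hyj : y j = x j - ε := by rw [hy, Function.update_self]
        have hyk : ∀ k, k ≠ i0 → k ≠ j → y k = x k := by
          intro k h1 h2
          rw [hy, Function.update_of_ne h2, Function.update_of_ne h1]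
        have hypos : ∀ k, 0 < y k := by
          intro k
          by_cases h1 : k = j
          · rw [h1, hyj]
            have : δ ≤ x j := min_le_right _ _
            linarith [hε.2]
          · by_cases h2 : k = i0
            · rw [h2, hyio]
              have : δ ≤ x i0 := min_le_left _ _
              linarith [hε.1]
            · rw [hyk k h2 h1]; exact hx k
        have hysum : ∑ k, y k = B := by
          rw [hdecomp j hji y, hyio, hyj]
          have hxsum := hdecomp j hji x
          have hrest : ∑ k ∈ (Finset.univ.erase i0).erase j, y k
              = ∑ k ∈ (Finset.univ.erase i0).erase j, x k := by
            apply Finset.sum_congr rfl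
            intro k hk
            rw [Finset.mem_erase, Finset.mem_erase] at hk
            exact hyk k hk.2.1 hk.1
          rw [hrest]
          rw [hxsum] at hsum
          linarith
        have hle := hopt y hypos hysum
        have hsx : ∑ k, f k (x k) = f i0 (x i0) + f j (x j)
            + ∑ k ∈ (Finset.univ.erase i0).erase j, f k (x k) :=
          hdecomp j hji (fun k => f k (x k))
        have hsy : ∑ k, f k (y k) = f i0 (x i0 + ε) + f j (x j - ε)
            + ∑ k ∈ (Finset.univ.erase i0).erase j, f k (x k) := by
          rw [hdecomp j hji (fun k => f k (y k)), hyio, hyj]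
          congr 1
          apply Finset.sum_congr rfl
          intro k hk
          rw [Finset.mem_erase, Finset.mem_erase] at hk
          rw [hyk k hk.2.1 hk.1]
        have hle' : ∑ k, f k (x k) ≤ ∑ k, f k (y k) := hle
        rw [hsx, hsy] at hle'
        simp only [hF, add_zero, sub_zero]
        linarith
      have hderiv : HasDerivAt F (g i0 (x i0) * 1 + g j (x j) * (-1)) 0 := by
        have h1 : HasDerivAt (fun ε : ℝ => x i0 + ε) 1 0 := by
          simpa using (hasDerivAt_id (0:ℝ)).const_add (x i0)
        have h2 : HasDerivAt (fun ε : ℝ => x j - ε) (-1) 0 := by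
          simpa using (hasDerivAt_id (0:ℝ)).const_sub (x j)
        have base1 : HasDerivAt (fun s : ℝ => f i0 s) (g i0 (x i0)) (x i0 + 0) := by
          rw [add_zero]; exact hasDerivAt_f (a i0) (c i0) (x i0) (hx i0)
        have base2 : HasDerivAt (fun s : ℝ => f j s) (g j (x j)) (x j - 0) := by
          rw [sub_zero]; exact hasDerivAt_f (a j) (c j) (x j) (hx j)
        have hf1 : HasDerivAt (fun ε : ℝ => f i0 (x i0 + ε)) (g i0 (x i0) * 1) 0 :=
          base1.comp (0:ℝ) h1
        have hf2 : HasDerivAt (fun ε : ℝ => f j (x j - ε)) (g j (x j) * (-1)) 0 :=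
          base2.comp (0:ℝ) h2
        exact hf1.add hf2
      have := hmin.hasDerivAt_eq_zero hderiv
      linarith [this]
  set lam : ℝ := -(g i0 (x i0)) with hlam
  have hgneg : g i0 (x i0) < 0 := by
    have hu : 0 < a i0 / x i0 := div_pos (ha i0) (hx i0)
    have := sign_lemma (a i0 / x i0) hu
    exact mul_neg_of_pos_of_neg (hc i0) this
  refine ⟨lam, by linarith, fun i => ?_⟩
  show g i (x i) + lam = 0
  rw [key i, hlam]
  ring
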